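/- Let p be a prime number with p = 2 or p ≡ 1 (mod 4). Then the negative Pell equation x² − p y² = −1 has a solution in integers x, y. -/

import Mathlib

/-- For a prime `p` with `p = 2` or `p ≡ 1 (mod 4)`, the negative
Pell equation `x² - p y² = -1` has an integer solution. -/
theorem stmt7 (p : ℕ) (hp : p.Prime) (h : p = 2 ∨ p % 4 = 1) :
    ∃ x y : ℤ, x ^ 2 - (p : ℤ) * y ^ 2 = -1 := by
  rcases h with rfl | h4
  · exact ⟨1, 1, by norm_num⟩
  have hp2 := hp.two_le
  have hp5 : 5 ≤ p := by omega
  have hns : ¬ IsSquare ((p : ℤ)) := by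
    rw [Int.isSquare_natCast_iff]
    exact Prime.not_isSquare hp.prime
  have key : ∃ n : ℕ, ∃ m : ℕ, 0 < m ∧ n ^ 2 = p * m ^ 2 + 1 := by
    obtain ⟨x, y, hxy, hy⟩ := Pell.exists_of_not_isSquare (by positivity) hns
    refine ⟨x.natAbs, y.natAbs, Int.natAbs_pos.mpr hy, ?_⟩
    have : (x.natAbs : ℤ) ^ 2 = (p : ℤ) * (y.natAbs : ℤ) ^ 2 + 1 := by
      rw [Int.natAbs_sq, Int.natAbs_sq]; linarith
    exact_mod_cast this
  classical
  obtain ⟨m, hm, heq⟩ := Nat.find_spec key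
  have hmin : ∀ b < Nat.find key, ¬ ∃ a, 0 < a ∧ b ^ 2 = p * a ^ 2 + 1 :=
    fun b hb => Nat.find_min key hb
  generalize hgen : Nat.find key = n at heq hmin
  clear hgen
  -- m is even
  have hmeven : m % 2 = 0 := by
    by_contra hodd
    obtain ⟨b, hb⟩ : ∃ b, m = 2 * b + 1 := ⟨m / 2, by omega⟩
    rcases Nat.even_or_odd n with ⟨c, hc⟩ | ⟨c, hc⟩
    · have h1 : 4 * c ^ 2 = 4 * (p * (b ^ 2 + b)) + p + 1 := by
        subst hb; rw [hc] at heq; nlinarith [heq]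
      generalize c ^ 2 = A at h1; generalize p * (b ^ 2 + b) = B at h1; omega
    · have h1 : 4 * (c ^ 2 + c) = 4 * (p * (b ^ 2 + b)) + p := by
        subst hb; rw [hc] at heq; nlinarith [heq]
      generalize c ^ 2 + c = A at h1; generalize p * (b ^ 2 + b) = B at h1; omega
  obtain ⟨w, hw⟩ : ∃ w, m = 2 * w := ⟨m / 2, by omega⟩
  have hw0 : 0 < w := by omega
  -- n is odd
  have hnodd : n % 2 = 1 := by
    rcases Nat.even_or_odd n with ⟨c, hc⟩ | ⟨c, hc⟩
    · exfalso
      have h1 : 4 * c ^ 2 = 4 * (p * w ^ 2) + 1 := by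
        rw [hc] at heq; rw [hw] at heq; nlinarith [heq]
      generalize c ^ 2 = A at h1; generalize p * w ^ 2 = B at h1; omega
    · omega
  obtain ⟨u, hu⟩ : ∃ u, n = 2 * u + 1 := ⟨n / 2, by omega⟩
  have hn3 : 3 ≤ n := by
    by_contra hc
    push_neg at hc
    have : n ^ 2 < 9 := by nlinarith
    have : 21 ≤ n ^ 2 := by
      rw [heq, hw]; nlinarith [hp5, hw0]
    omega
  have hu0 : 0 < u := by omega
  subst hu
  -- u(u+1) = p w²
  have hkey : u * (u + 1) = p * w ^ 2 := by
    rw [hw] at heq; nlinarith [heq]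
  have hcop : Nat.Coprime u (u + 1) := by
    show Nat.gcd u (u + 1) = 1
    rw [Nat.gcd_comm, Nat.gcd_self_add_left]
    exact Nat.gcd_one_left u
  have hpdvd : p ∣ u * (u + 1) := hkey ▸ Dvd.intro (w ^ 2) rfl
  rcases (Nat.Prime.dvd_mul hp).mp hpdvd with hpu | hpu1
  · -- p ∣ u : contradiction with minimality
    exfalso
    obtain ⟨t, ht⟩ := hpu
    have ht2 : t * (u + 1) = w ^ 2 := by
      have : p * (t * (u + 1)) = p * w ^ 2 := by rw [← hkey, ht]; ring
      exact Nat.eq_of_mul_eq_mul_left hp.pos this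
    have hcop2 : Nat.Coprime t (u + 1) :=
      Nat.Coprime.coprime_dvd_left ⟨p, by rw [ht]; ring⟩ hcop
    obtain ⟨a, ha⟩ : ∃ a, t = a ^ 2 :=
      exists_eq_pow_of_mul_eq_pow (Nat.isUnit_iff.mpr hcop2) ht2
    obtain ⟨b, hbb⟩ : ∃ b, u + 1 = b ^ 2 :=
      exists_eq_pow_of_mul_eq_pow (c := w) (Nat.isUnit_iff.mpr hcop2.symm)
        (by rw [mul_comm]; exact ht2)
    have ha0 : 0 < a := by
      rcases Nat.eq_zero_or_pos a with rfl | h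
      · exfalso; simp [ha] at ht; omega
      · exact h
    have hbeq : b ^ 2 = p * a ^ 2 + 1 := by rw [← ha, ← hbb]; omega
    have hblt : b < 2 * u + 1 := by
      have h1 : b ≤ b ^ 2 := Nat.le_self_pow (by norm_num) b
      omega
    exact hmin b hblt ⟨a, ha0, hbeq⟩
  · -- p ∣ u + 1 : produce the solution
    obtain ⟨t, ht⟩ := hpu1
    have ht2 : u * t = w ^ 2 := by
      have : p * (u * t) = p * w ^ 2 := by rw [← hkey, ht]; ring
      exact Nat.eq_of_mul_eq_mul_left hp.pos this
    have hcop2 : Nat.Coprime u t :=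
      Nat.Coprime.coprime_dvd_right ⟨p, by rw [ht]; ring⟩ hcop
    obtain ⟨a, ha⟩ : ∃ a, u = a ^ 2 :=
      exists_eq_pow_of_mul_eq_pow (Nat.isUnit_iff.mpr hcop2) ht2
    obtain ⟨b, hbb⟩ : ∃ b, t = b ^ 2 :=
      exists_eq_pow_of_mul_eq_pow (c := w) (Nat.isUnit_iff.mpr hcop2.symm)
        (by rw [mul_comm]; exact ht2)
    refine ⟨a, b, ?_⟩
    have hnat : a ^ 2 + 1 = p * b ^ 2 := by rw [← hbb, ← ha]; exact ht
    have : ((a : ℤ)) ^ 2 + 1 = (p : ℤ) * (b : ℤ) ^ 2 := by exact_mod_cast hnat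
    linarith
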